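/- Let d₀, d₁ ≥ 1, let U_0, …, U_{d₀-1} and V_0, …, V_{d₁-1} be unitary 2×2 complex matrices, let H_{d₀} and H_{d₁} be the Fourier matrices of sizes d₀ and d₁, and define the unitaries U = Σ_{i<d₀} U_i ⊗ (H_{d₀}|i⟩⟨i|H_{d₀}†) ⊗ I_{d₁} and V = Σ_{j<d₁} V_j ⊗ I_{d₀} ⊗ (H_{d₁}|j⟩⟨j|H_{d₁}†) on ℂ²⊗ℂ^{d₀}⊗ℂ^{d₁}, and set W = U V. Then for every linear map E on M₂(ℂ) and every ρ ∈ M₂(ℂ), tr_{2,3}[ W† · ((E ⊗ id ⊗ id)( W (ρ ⊗ |0⟩⟨0| ⊗ |0⟩⟨0|) W† )) · W ] = (1/(d₀ d₁)) Σ_{i<d₀} Σ_{j<d₁} V_j† U_i† · E( U_i V_j ρ V_j† U_i† ) · U_i V_j; that is, the supermap built from W realizes the composition of the twirl by {V_j} followed by the twirl by {U_i}. -/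

import Mathlib

open Matrix
open scoped Kronecker BigOperators

/-- The `d × d` Fourier matrix, with entries `e^{2πi jk/d}/√d`. -/
noncomputable def fourierMat (d : ℕ) : Matrix (Fin d) (Fin d) ℂ :=
  Matrix.of fun j k : Fin d =>
    Complex.exp (2 * Real.pi * Complex.I * (j : ℕ) * (k : ℕ) / d) / (Real.sqrt d : ℂ)

/-- The action of `E ⊗ id ⊗ id` on `M₂(ℂ) ⊗ M_{d₀}(ℂ) ⊗ M_{d₁}(ℂ)`, acting as `E`
on the first tensor factor and as the identity on the other two. -/
noncomputable def tensorMap3 (d₀ d₁ : ℕ)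
    (E : Matrix (Fin 2) (Fin 2) ℂ →ₗ[ℂ] Matrix (Fin 2) (Fin 2) ℂ)
    (M : Matrix ((Fin 2 × Fin d₀) × Fin d₁) ((Fin 2 × Fin d₀) × Fin d₁) ℂ) :
    Matrix ((Fin 2 × Fin d₀) × Fin d₁) ((Fin 2 × Fin d₀) × Fin d₁) ℂ :=
  Matrix.of fun p q =>
    E (Matrix.of fun a b => M ((a, p.1.2), p.2) ((b, q.1.2), q.2)) p.1.1 q.1.1

/-- Partial trace over the second and third tensor factors. -/
noncomputable def ptrace23 (d₀ d₁ : ℕ)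
    (M : Matrix ((Fin 2 × Fin d₀) × Fin d₁) ((Fin 2 × Fin d₀) × Fin d₁) ℂ) :
    Matrix (Fin 2) (Fin 2) ℂ :=
  Matrix.of fun a b => ∑ m : Fin d₀, ∑ n : Fin d₁, M ((a, m), n) ((b, m), n)

lemma fourier_cHmul (d : ℕ) (hd : 0 < d) : (fourierMat d)ᴴ * fourierMat d = 1 := by
  have hdC : (d : ℂ) ≠ 0 := Nat.cast_ne_zero.mpr hd.ne'
  have hω : IsPrimitiveRoot (Complex.exp (2 * Real.pi * Complex.I / d)) d :=
    Complex.isPrimitiveRoot_exp d hd.ne'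
  set ω := Complex.exp (2 * Real.pi * Complex.I / d) with hωdef
  have hω0 : ω ≠ 0 := hω.ne_zero hd.ne'
  have hsq : (Real.sqrt d : ℂ) * (Real.sqrt d : ℂ) = (d : ℂ) := by
    rw [← Complex.ofReal_mul, Real.mul_self_sqrt (Nat.cast_nonneg d)]
    norm_cast
  have hentry : ∀ m j : Fin d, fourierMat d m j = ω ^ ((m : ℕ) * (j : ℕ)) / (Real.sqrt d : ℂ) := by
    intro m j
    rw [fourierMat, of_apply, ← Complex.exp_nat_mul]
    congr 1
    push_cast
    ring
  ext j k
  simp only [mul_apply, conjTranspose_apply, hentry, one_apply]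
  have hterm : ∀ m : Fin d,
      star (ω ^ ((m : ℕ) * (j : ℕ)) / (Real.sqrt d : ℂ)) * (ω ^ ((m : ℕ) * (k : ℕ)) / (Real.sqrt d : ℂ))
        = ((ω ^ (k : ℕ) / ω ^ (j : ℕ)) ^ (m : ℕ)) / d := by
    intro m
    have hstar : star ω = ω⁻¹ := by
      rw [Complex.star_def, hωdef, ← Complex.exp_conj, ← Complex.exp_neg]
      congr 1
      simp only [map_div₀, _root_.map_mul, map_ofNat, Complex.conj_I, Complex.conj_ofReal,
        Complex.conj_natCast]
      ring
    rw [star_div₀, star_pow, hstar, Complex.star_def, Complex.conj_ofReal]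
    rw [div_mul_div_comm, hsq, div_pow, ← pow_mul, ← pow_mul, inv_pow]
    rw [mul_comm (j : ℕ) (m : ℕ), mul_comm (k : ℕ) (m : ℕ)]
    field_simp
  rw [Finset.sum_congr rfl (fun m _ => hterm m)]
  by_cases hjk : j = k
  · subst hjk
    rw [div_self (pow_ne_zero _ hω0)]
    simp only [one_pow, Finset.sum_const, Finset.card_univ, Fintype.card_fin, nsmul_eq_mul,
      mul_one_div, if_pos rfl]
    field_simp
    simp
  · rw [if_neg hjk, ← Finset.sum_div]
    have hζ1 : ω ^ (k : ℕ) / ω ^ (j : ℕ) ≠ 1 := by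
      intro h
      rw [div_eq_one_iff_eq (pow_ne_zero _ hω0)] at h
      exact hjk (Fin.ext (hω.pow_inj j.isLt k.isLt h.symm))
    rw [Fin.sum_univ_eq_sum_range (fun m => (ω ^ (k : ℕ) / ω ^ (j : ℕ)) ^ m) d,
      geom_sum_eq hζ1]
    have : (ω ^ (k : ℕ) / ω ^ (j : ℕ)) ^ d = 1 := by
      rw [div_pow, ← pow_mul, ← pow_mul, mul_comm (k:ℕ) d, mul_comm (j:ℕ) d,
        pow_mul, pow_mul, hω.pow_eq_one, one_pow, one_pow]
      norm_num
    rw [this, sub_self, zero_div, zero_div]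


lemma fourier_mul_cH (d : ℕ) (hd : 0 < d) : fourierMat d * (fourierMat d)ᴴ = 1 :=
  mul_eq_one_comm.mp (fourier_cHmul d hd)

noncomputable def proj (d : ℕ) (i : Fin d) : Matrix (Fin d) (Fin d) ℂ :=
  fourierMat d * Matrix.single i i 1 * (fourierMat d)ᴴ

lemma std_herm {d : ℕ} (i : Fin d) :
    (Matrix.single i i (1:ℂ))ᴴ = Matrix.single i i 1 := by
  ext a b
  simp [conjTranspose_apply, Matrix.single, apply_ite, and_comm]

lemma proj_herm (d : ℕ) (i : Fin d) : (proj d i)ᴴ = proj d i := by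
  rw [proj, conjTranspose_mul, conjTranspose_mul, conjTranspose_conjTranspose, std_herm,
    Matrix.mul_assoc]

lemma proj_mul_proj (d : ℕ) (hd : 0 < d) (i i' : Fin d) :
    proj d i * proj d i' = if i = i' then proj d i else 0 := by
  have h1 : proj d i * proj d i' =
      fourierMat d * (Matrix.single i i 1 * Matrix.single i' i' 1) * (fourierMat d)ᴴ := by
    rw [proj, proj]
    simp only [Matrix.mul_assoc]
    rw [← Matrix.mul_assoc ((fourierMat d)ᴴ) (fourierMat d), fourier_cHmul d hd, Matrix.one_mul]
  by_cases h : i = i'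
  · subst h
    rw [if_pos rfl, h1, single_mul_single_same, mul_one, proj]
  · rw [if_neg h, h1]
    rw [show Matrix.single i i (1:ℂ) * Matrix.single i' i' 1 = 0 from
      Matrix.single_mul_single_of_ne (h := h) ..]
    rw [Matrix.mul_zero, Matrix.zero_mul]

lemma proj_apply_zero (d : ℕ) (hd : 1 ≤ d) (i : Fin d) :
    proj d i ⟨0, hd⟩ ⟨0, hd⟩ = 1 / d := by
  have hsq : (Real.sqrt d : ℂ) * (Real.sqrt d : ℂ) = (d : ℂ) := by
    rw [← Complex.ofReal_mul, Real.mul_self_sqrt (Nat.cast_nonneg d)]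
    norm_cast
  have h0 : fourierMat d ⟨0, hd⟩ i = 1 / (Real.sqrt d : ℂ) := by
    simp [fourierMat]
  have h : proj d i ⟨0, hd⟩ ⟨0, hd⟩
      = fourierMat d ⟨0, hd⟩ i * star (fourierMat d ⟨0, hd⟩ i) := by
    rw [proj, Matrix.mul_assoc, mul_apply]
    rw [Finset.sum_eq_single i, mul_apply, Finset.sum_eq_single i]
    · simp [conjTranspose_apply]
    · intro b _ hb
      simp [Matrix.single, Ne.symm hb]
    · simp
    · intro b _ hb
      rw [mul_apply]
      rw [Finset.sum_eq_zero, mul_zero]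
      intro c _
      simp only [Matrix.single, of_apply, conjTranspose_apply, ite_mul, one_mul, zero_mul]
      rw [if_neg]
      rintro ⟨rfl, rfl⟩
      exact hb rfl
    · simp
  rw [h, h0]
  rw [Complex.star_def, map_div₀, _root_.map_one, Complex.conj_ofReal, div_mul_div_comm, hsq, one_mul]

lemma trace_mul_std {d : ℕ} (M : Matrix (Fin d) (Fin d) ℂ) (a : Fin d) :
    trace (M * Matrix.single a a 1) = M a a := by
  rw [trace]
  rw [Finset.sum_eq_single a]
  · simp [diag]
  · intro b _ hb
    simp [diag, mul_single_apply_of_ne (hbj := hb)]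
  · simp

lemma trace_proj_chain (d : ℕ) (hd : 1 ≤ d) (k i i' k' : Fin d) :
    trace (proj d k * (proj d i * (Matrix.single (⟨0, hd⟩ : Fin d) (⟨0, hd⟩ : Fin d) 1 *
        (proj d i' * proj d k'))))
      = if k = i then if i' = k' then if i' = i then (1 / d : ℂ) else 0 else 0 else 0 := by
  rw [← Matrix.mul_assoc (proj d k), proj_mul_proj d hd]
  by_cases h1 : k = i
  · subst h1
    rw [if_pos rfl, if_pos rfl, proj_mul_proj d hd]
    by_cases h2 : i' = k'
    · subst h2
      rw [if_pos rfl, if_pos rfl, ← Matrix.mul_assoc, trace_mul_cycle, proj_mul_proj d hd]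
      by_cases h3 : i' = k
      · rw [if_pos h3, if_pos h3, trace_mul_std, h3, proj_apply_zero d hd]
      · rw [if_neg h3, if_neg h3, Matrix.zero_mul, trace_zero]
    · rw [if_neg h2, if_neg h2, Matrix.mul_zero, Matrix.mul_zero, trace_zero]
  · rw [if_neg h1, if_neg h1, Matrix.zero_mul, trace_zero]

variable {l m n p : Type*}

lemma kron_conjT [Fintype m] [Fintype n] (A : Matrix l m ℂ) (B : Matrix n p ℂ) :
    (A ⊗ₖ B)ᴴ = Aᴴ ⊗ₖ Bᴴ := by
  ext ⟨a, b⟩ ⟨c, e⟩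
  simp [conjTranspose_apply, kroneckerMap_apply, star_mul', mul_comm]

lemma sum_kron {ι : Type*} (s : Finset ι) (f : ι → Matrix l m ℂ) (B : Matrix n p ℂ) :
    (∑ i ∈ s, f i) ⊗ₖ B = ∑ i ∈ s, f i ⊗ₖ B := by
  ext ⟨a, b⟩ ⟨c, e⟩
  simp [kroneckerMap_apply, Matrix.sum_apply, Finset.sum_mul]

lemma kron_sum {ι : Type*} (s : Finset ι) (A : Matrix l m ℂ) (f : ι → Matrix n p ℂ) :
    A ⊗ₖ (∑ i ∈ s, f i) = ∑ i ∈ s, A ⊗ₖ f i := by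
  ext ⟨a, b⟩ ⟨c, e⟩
  simp [kroneckerMap_apply, Matrix.sum_apply, Finset.mul_sum]

noncomputable def tensorMap3L (d₀ d₁ : ℕ)
    (E : Matrix (Fin 2) (Fin 2) ℂ →ₗ[ℂ] Matrix (Fin 2) (Fin 2) ℂ) :
    Matrix ((Fin 2 × Fin d₀) × Fin d₁) ((Fin 2 × Fin d₀) × Fin d₁) ℂ →ₗ[ℂ]
      Matrix ((Fin 2 × Fin d₀) × Fin d₁) ((Fin 2 × Fin d₀) × Fin d₁) ℂ where
  toFun := tensorMap3 d₀ d₁ E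
  map_add' M N := by
    ext ⟨⟨a, m⟩, n⟩ ⟨⟨b, m'⟩, n'⟩
    simp only [tensorMap3, of_apply, Matrix.add_apply]
    rw [show (Matrix.of fun a b => M ((a, m), n) ((b, m'), n') + N ((a, m), n) ((b, m'), n'))
        = (Matrix.of fun a b => M ((a, m), n) ((b, m'), n'))
          + (Matrix.of fun a b => N ((a, m), n) ((b, m'), n')) from by
      ext x y; simp [Matrix.add_apply]]
    rw [map_add]
    simp
  map_smul' c M := by
    ext ⟨⟨a, m⟩, n⟩ ⟨⟨b, m'⟩, n'⟩
    simp only [tensorMap3, of_apply, Matrix.smul_apply, RingHom.id_apply]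
    rw [show (Matrix.of fun a b => c • M ((a, m), n) ((b, m'), n'))
        = c • (Matrix.of fun a b => M ((a, m), n) ((b, m'), n')) from by
      ext x y; simp]
    rw [_root_.map_smul]
    simp

lemma tensorMap3_sum (d₀ d₁ : ℕ)
    (E : Matrix (Fin 2) (Fin 2) ℂ →ₗ[ℂ] Matrix (Fin 2) (Fin 2) ℂ)
    {ι : Type*} (s : Finset ι)
    (f : ι → Matrix ((Fin 2 × Fin d₀) × Fin d₁) ((Fin 2 × Fin d₀) × Fin d₁) ℂ) :
    tensorMap3 d₀ d₁ E (∑ x ∈ s, f x) = ∑ x ∈ s, tensorMap3 d₀ d₁ E (f x) :=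
  map_sum (tensorMap3L d₀ d₁ E) f s

lemma tensorMap3_kron (d₀ d₁ : ℕ)
    (E : Matrix (Fin 2) (Fin 2) ℂ →ₗ[ℂ] Matrix (Fin 2) (Fin 2) ℂ)
    (A : Matrix (Fin 2) (Fin 2) ℂ) (B : Matrix (Fin d₀) (Fin d₀) ℂ)
    (C : Matrix (Fin d₁) (Fin d₁) ℂ) :
    tensorMap3 d₀ d₁ E (A ⊗ₖ B ⊗ₖ C) = (E A) ⊗ₖ B ⊗ₖ C := by
  ext ⟨⟨a, m⟩, n⟩ ⟨⟨b, m'⟩, n'⟩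
  simp only [tensorMap3, of_apply, kroneckerMap_apply]
  rw [show (Matrix.of fun a b => A a b * B m m' * C n n') = (B m m' * C n n') • A from by
    ext x y; simp [Matrix.smul_apply, smul_eq_mul]; ring]
  rw [_root_.map_smul]
  simp only [Matrix.smul_apply, smul_eq_mul]
  ring

noncomputable def ptrace23L (d₀ d₁ : ℕ) :
    Matrix ((Fin 2 × Fin d₀) × Fin d₁) ((Fin 2 × Fin d₀) × Fin d₁) ℂ →ₗ[ℂ]
      Matrix (Fin 2) (Fin 2) ℂ where
  toFun := ptrace23 d₀ d₁
  map_add' M N := by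
    ext a b
    simp [ptrace23, Matrix.add_apply, Finset.sum_add_distrib]
  map_smul' c M := by
    ext a b
    simp [ptrace23, Finset.mul_sum]

lemma ptrace23_sum (d₀ d₁ : ℕ) {ι : Type*} (s : Finset ι)
    (f : ι → Matrix ((Fin 2 × Fin d₀) × Fin d₁) ((Fin 2 × Fin d₀) × Fin d₁) ℂ) :
    ptrace23 d₀ d₁ (∑ x ∈ s, f x) = ∑ x ∈ s, ptrace23 d₀ d₁ (f x) :=
  map_sum (ptrace23L d₀ d₁) f s

lemma ptrace23_kron (d₀ d₁ : ℕ) (A : Matrix (Fin 2) (Fin 2) ℂ)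
    (B : Matrix (Fin d₀) (Fin d₀) ℂ) (C : Matrix (Fin d₁) (Fin d₁) ℂ) :
    ptrace23 d₀ d₁ (A ⊗ₖ B ⊗ₖ C) = (trace B * trace C) • A := by
  ext a b
  simp only [ptrace23, of_apply, kroneckerMap_apply, Matrix.smul_apply, smul_eq_mul, Matrix.trace, Matrix.diag,
    Finset.sum_mul, Finset.mul_sum]
  rw [Finset.sum_comm]
  exact Finset.sum_congr rfl fun n _ => Finset.sum_congr rfl fun m _ => by ring


theorem stmt2 (d₀ d₁ : ℕ) (hd₀ : 1 ≤ d₀) (hd₁ : 1 ≤ d₁)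
    (U' : Fin d₀ → Matrix (Fin 2) (Fin 2) ℂ)
    (V' : Fin d₁ → Matrix (Fin 2) (Fin 2) ℂ)
    (hU' : ∀ i, U' i ∈ Matrix.unitaryGroup (Fin 2) ℂ)
    (hV' : ∀ j, V' j ∈ Matrix.unitaryGroup (Fin 2) ℂ)
    (U V W : Matrix ((Fin 2 × Fin d₀) × Fin d₁) ((Fin 2 × Fin d₀) × Fin d₁) ℂ)
    (hU : U = ∑ i : Fin d₀,
      (U' i) ⊗ₖ (fourierMat d₀ * Matrix.single i i 1 * (fourierMat d₀)ᴴ) ⊗ₖ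
        (1 : Matrix (Fin d₁) (Fin d₁) ℂ))
    (hV : V = ∑ j : Fin d₁,
      (V' j) ⊗ₖ (1 : Matrix (Fin d₀) (Fin d₀) ℂ) ⊗ₖ
        (fourierMat d₁ * Matrix.single j j 1 * (fourierMat d₁)ᴴ))
    (hW : W = U * V)
    (E : Matrix (Fin 2) (Fin 2) ℂ →ₗ[ℂ] Matrix (Fin 2) (Fin 2) ℂ)
    (ρ : Matrix (Fin 2) (Fin 2) ℂ) :
    ptrace23 d₀ d₁
      (Wᴴ * tensorMap3 d₀ d₁ E
        (W * (ρ ⊗ₖ Matrix.single (⟨0, hd₀⟩ : Fin d₀) (⟨0, hd₀⟩ : Fin d₀) 1 ⊗ₖ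
                Matrix.single (⟨0, hd₁⟩ : Fin d₁) (⟨0, hd₁⟩ : Fin d₁) 1) * Wᴴ) * W)
      = (1 / ((d₀ : ℂ) * (d₁ : ℂ))) •
          ∑ i : Fin d₀, ∑ j : Fin d₁,
            (V' j)ᴴ * (U' i)ᴴ * E (U' i * V' j * ρ * (V' j)ᴴ * (U' i)ᴴ) *
              (U' i * V' j) := by
  have hW2 : W = ∑ i : Fin d₀, ∑ j : Fin d₁,
      (U' i * V' j) ⊗ₖ proj d₀ i ⊗ₖ proj d₁ j := by
    rw [hW, hU, hV, Finset.sum_mul]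
    refine Finset.sum_congr rfl fun i _ => ?_
    rw [Finset.mul_sum]
    refine Finset.sum_congr rfl fun j _ => ?_
    simp only [← Matrix.mul_kronecker_mul, Matrix.mul_one, Matrix.one_mul, proj]
  have hWH : Wᴴ = ∑ i : Fin d₀, ∑ j : Fin d₁,
      ((V' j)ᴴ * (U' i)ᴴ) ⊗ₖ proj d₀ i ⊗ₖ proj d₁ j := by
    rw [hW2]
    rw [conjTranspose_sum]
    refine Finset.sum_congr rfl fun i _ => ?_
    rw [conjTranspose_sum]
    refine Finset.sum_congr rfl fun j _ => ?_
    rw [kron_conjT, kron_conjT, conjTranspose_mul, proj_herm, proj_herm]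
  rw [hWH, hW2]
  simp only [Finset.sum_mul, Finset.mul_sum, ← Matrix.mul_kronecker_mul,
    tensorMap3_sum, tensorMap3_kron, ptrace23_sum, ptrace23_kron]
  simp only [Matrix.mul_assoc]
  simp only [trace_proj_chain d₀ hd₀, trace_proj_chain d₁ hd₁]
  simp only [mul_ite, ite_mul, mul_zero, zero_mul, ite_smul, zero_smul,
    Finset.sum_ite_irrel, Finset.sum_const_zero, Finset.sum_ite_eq, Finset.sum_ite_eq',
    Finset.mem_univ, if_true]
  rw [Finset.smul_sum]
  refine Finset.sum_congr rfl fun i _ => ?_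
  rw [Finset.smul_sum]
  refine Finset.sum_congr rfl fun j _ => ?_
  rw [one_div_mul_one_div]
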